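/- Let R, S be rings, M an (R,S)-bimodule and N an (S,R)-bimodule with an (R,R)-bimodule isomorphism M ⊗[S] N ≅ R and an (S,S)-bimodule isomorphism N ⊗[R] M ≅ S. Then the additive functors G : L ↦ M ⊗[S] L from left S-modules to left R-modules and F : K ↦ N ⊗[R] K from left R-modules to left S-modules satisfy F ∘ G ≅ id and G ∘ F ≅ id naturally; in particular G and F are mutually quasi-inverse equivalences of categories. -/

import Mathlib

open scoped TensorProduct
open MulOpposite

namespace Paper

noncomputable section

/-- The subgroup of relators defining the balanced tensor product `M ⊗[S] N`
of a right `S`-module `M` and a left `S`-module `N`. -/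
def balRel (S : Type*) [Ring S] (M : Type*) [AddCommGroup M] [Module Sᵐᵒᵖ M]
    (N : Type*) [AddCommGroup N] [Module S N] : AddSubgroup (M ⊗[ℤ] N) :=
  AddSubgroup.closure
    {x | ∃ (m : M) (s : S) (n : N), x = (op s • m) ⊗ₜ[ℤ] n - m ⊗ₜ[ℤ] (s • n)}

/-- The balanced tensor product `M ⊗[S] N` of a right `S`-module `M` and a
left `S`-module `N`: the quotient of the tensor product `M ⊗[ℤ] N` of abelian
groups by the relations `(m • s) ⊗ n = m ⊗ (s • n)`. -/
def BalTensor (S : Type*) [Ring S] (M : Type*) [AddCommGroup M] [Module Sᵐᵒᵖ M]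
    (N : Type*) [AddCommGroup N] [Module S N] : Type _ :=
  (M ⊗[ℤ] N) ⧸ balRel S M N

instance (S : Type*) [Ring S] (M : Type*) [AddCommGroup M] [Module Sᵐᵒᵖ M]
    (N : Type*) [AddCommGroup N] [Module S N] : AddCommGroup (BalTensor S M N) :=
  QuotientAddGroup.Quotient.addCommGroup _

/-- The elementary tensor `m ⊗ n` in the balanced tensor product `M ⊗[S] N`. -/
def BalTensor.tmul (S : Type*) [Ring S] (M : Type*) [AddCommGroup M] [Module Sᵐᵒᵖ M]
    (N : Type*) [AddCommGroup N] [Module S N] (m : M) (n : N) : BalTensor S M N :=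
  QuotientAddGroup.mk (m ⊗ₜ[ℤ] n)


/-- The canonical projection onto the balanced tensor product. -/
def BalTensor.mk (S : Type*) [Ring S] (M : Type*) [AddCommGroup M] [Module Sᵐᵒᵖ M]
    (N : Type*) [AddCommGroup N] [Module S N] (x : M ⊗[ℤ] N) : BalTensor S M N :=
  QuotientAddGroup.mk x

/-- The left action of `r : R` on `M ⊗[ℤ] N` through the first factor. -/
def lsmulAux (R : Type*) [Ring R] (M : Type*) [AddCommGroup M] [Module R M]
    (N : Type*) [AddCommGroup N] (r : R) : M ⊗[ℤ] N →+ M ⊗[ℤ] N :=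
  (LinearMap.rTensor N ((DistribMulAction.toAddMonoidHom M r).toIntLinearMap)).toAddMonoidHom

/-- The right action of `t : Tᵐᵒᵖ` on `M ⊗[ℤ] N` through the second factor. -/
def rsmulAux (T : Type*) [Ring T] (M : Type*) [AddCommGroup M]
    (N : Type*) [AddCommGroup N] [Module Tᵐᵒᵖ N] (t : Tᵐᵒᵖ) : M ⊗[ℤ] N →+ M ⊗[ℤ] N :=
  (LinearMap.lTensor M ((DistribMulAction.toAddMonoidHom N t).toIntLinearMap)).toAddMonoidHom

section LeftAction

variable (R S : Type*) [Ring R] [Ring S]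
  (M : Type*) [AddCommGroup M] [Module R M] [Module Sᵐᵒᵖ M] [SMulCommClass R Sᵐᵒᵖ M]
  (N : Type*) [AddCommGroup N] [Module S N]

theorem lsmulAux_le (r : R) :
    balRel S M N ≤ (balRel S M N).comap (lsmulAux R M N r) := by
  rw [balRel, AddSubgroup.closure_le]
  rintro x ⟨m, s, n, rfl⟩
  simp only [SetLike.mem_coe, AddSubgroup.mem_comap, map_sub]
  have h1 : lsmulAux R M N r ((op s • m) ⊗ₜ[ℤ] n) = (op s • (r • m)) ⊗ₜ[ℤ] n := by
    simp [lsmulAux, LinearMap.rTensor_tmul, smul_comm]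
  have h2 : lsmulAux R M N r (m ⊗ₜ[ℤ] (s • n)) = (r • m) ⊗ₜ[ℤ] (s • n) := by
    simp [lsmulAux, LinearMap.rTensor_tmul]
  rw [h1, h2]
  exact AddSubgroup.subset_closure ⟨r • m, s, n, rfl⟩

instance : SMul R (BalTensor S M N) :=
  ⟨fun r => QuotientAddGroup.map _ _ (lsmulAux R M N r) (lsmulAux_le R S M N r)⟩

theorem BalTensor.lsmul_mk (r : R) (x : M ⊗[ℤ] N) :
    r • (BalTensor.mk S M N x) = BalTensor.mk S M N (lsmulAux R M N r x) := rfl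

instance : Module R (BalTensor S M N) where
  smul r x := r • x
  one_smul x := by
    induction x using QuotientAddGroup.induction_on with
    | H y =>
      show QuotientAddGroup.mk (lsmulAux R M N 1 y) = _
      congr 1
      induction y using TensorProduct.induction_on with
      | zero => simp
      | tmul m n => simp [lsmulAux]
      | add a b ha hb => simp only [map_add, ha, hb]
  mul_smul a b x := by
    induction x using QuotientAddGroup.induction_on with
    | H y =>
      show QuotientAddGroup.mk (lsmulAux R M N (a * b) y) =
        QuotientAddGroup.mk (lsmulAux R M N a (lsmulAux R M N b y))
      congr 1
      induction y using TensorProduct.induction_on with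
      | zero => simp
      | tmul m n => simp [lsmulAux, mul_smul]
      | add a' b' ha hb => simp only [map_add, ha, hb]
  smul_zero r := map_zero (QuotientAddGroup.map _ _ (lsmulAux R M N r) (lsmulAux_le R S M N r))
  smul_add r x y := map_add (QuotientAddGroup.map _ _ (lsmulAux R M N r) (lsmulAux_le R S M N r)) x y
  add_smul a b x := by
    induction x using QuotientAddGroup.induction_on with
    | H y =>
      show QuotientAddGroup.mk (lsmulAux R M N (a + b) y) =
        QuotientAddGroup.mk (lsmulAux R M N a y) + QuotientAddGroup.mk (lsmulAux R M N b y)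
      refine Eq.trans ?_ (QuotientAddGroup.mk_add _ _ _)
      congr 1
      induction y using TensorProduct.induction_on with
      | zero => simp
      | tmul m n => simp [lsmulAux, add_smul, TensorProduct.add_tmul]
      | add a' b' ha hb =>
        simp only [map_add, ha, hb]
        abel
  zero_smul x := by
    induction x using QuotientAddGroup.induction_on with
    | H y =>
      show QuotientAddGroup.mk (lsmulAux R M N (0 : R) y) = 0
      have : lsmulAux R M N (0 : R) y = 0 := by
        induction y using TensorProduct.induction_on with
        | zero => simp
        | tmul m n => simp [lsmulAux]
        | add a' b' ha hb => simp only [map_add, ha, hb]; abel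
      rw [this]
      rfl

theorem BalTensor.smul_tmul (r : R) (m : M) (n : N) :
    r • (BalTensor.tmul S M N m n) = BalTensor.tmul S M N (r • m) n := by
  show QuotientAddGroup.mk (lsmulAux R M N r (m ⊗ₜ[ℤ] n)) = _
  rw [BalTensor.tmul]
  congr 1

end LeftAction

section RightAction

variable (S T : Type*) [Ring S] [Ring T]
  (M : Type*) [AddCommGroup M] [Module Sᵐᵒᵖ M]
  (N : Type*) [AddCommGroup N] [Module S N] [Module Tᵐᵒᵖ N] [SMulCommClass S Tᵐᵒᵖ N]

theorem rsmulAux_le (t : Tᵐᵒᵖ) :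
    balRel S M N ≤ (balRel S M N).comap (rsmulAux T M N t) := by
  rw [balRel, AddSubgroup.closure_le]
  rintro x ⟨m, s, n, rfl⟩
  simp only [SetLike.mem_coe, AddSubgroup.mem_comap, map_sub]
  have h1 : rsmulAux T M N t ((op s • m) ⊗ₜ[ℤ] n) = (op s • m) ⊗ₜ[ℤ] (t • n) := by
    simp [rsmulAux, LinearMap.lTensor_tmul]
  have h2 : rsmulAux T M N t (m ⊗ₜ[ℤ] (s • n)) = m ⊗ₜ[ℤ] (s • (t • n)) := by
    simp [rsmulAux, LinearMap.lTensor_tmul, smul_comm]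
  rw [h1, h2]
  exact AddSubgroup.subset_closure ⟨m, s, t • n, rfl⟩

instance : SMul Tᵐᵒᵖ (BalTensor S M N) :=
  ⟨fun t => QuotientAddGroup.map _ _ (rsmulAux T M N t) (rsmulAux_le S T M N t)⟩

theorem BalTensor.rsmul_mk (t : Tᵐᵒᵖ) (x : M ⊗[ℤ] N) :
    t • (BalTensor.mk S M N x) = BalTensor.mk S M N (rsmulAux T M N t x) := rfl

instance : Module Tᵐᵒᵖ (BalTensor S M N) where
  smul t x := t • x
  one_smul x := by
    induction x using QuotientAddGroup.induction_on with
    | H y =>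
      show QuotientAddGroup.mk (rsmulAux T M N 1 y) = _
      congr 1
      induction y using TensorProduct.induction_on with
      | zero => simp
      | tmul m n => simp [rsmulAux]
      | add a b ha hb => simp only [map_add, ha, hb]
  mul_smul a b x := by
    induction x using QuotientAddGroup.induction_on with
    | H y =>
      show QuotientAddGroup.mk (rsmulAux T M N (a * b) y) =
        QuotientAddGroup.mk (rsmulAux T M N a (rsmulAux T M N b y))
      congr 1
      induction y using TensorProduct.induction_on with
      | zero => simp
      | tmul m n => simp [rsmulAux, mul_smul]
      | add a' b' ha hb => simp only [map_add, ha, hb]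
  smul_zero t := map_zero (QuotientAddGroup.map _ _ (rsmulAux T M N t) (rsmulAux_le S T M N t))
  smul_add t x y := map_add (QuotientAddGroup.map _ _ (rsmulAux T M N t) (rsmulAux_le S T M N t)) x y
  add_smul a b x := by
    induction x using QuotientAddGroup.induction_on with
    | H y =>
      show QuotientAddGroup.mk (rsmulAux T M N (a + b) y) =
        QuotientAddGroup.mk (rsmulAux T M N a y) + QuotientAddGroup.mk (rsmulAux T M N b y)
      refine Eq.trans ?_ (QuotientAddGroup.mk_add _ _ _)
      congr 1
      induction y using TensorProduct.induction_on with
      | zero => simp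
      | tmul m n => simp [rsmulAux, add_smul, TensorProduct.tmul_add]
      | add a' b' ha hb =>
        simp only [map_add, ha, hb]
        abel
  zero_smul x := by
    induction x using QuotientAddGroup.induction_on with
    | H y =>
      show QuotientAddGroup.mk (rsmulAux T M N (0 : Tᵐᵒᵖ) y) = 0
      have : rsmulAux T M N (0 : Tᵐᵒᵖ) y = 0 := by
        induction y using TensorProduct.induction_on with
        | zero => simp
        | tmul m n => simp [rsmulAux]
        | add a' b' ha hb => simp only [map_add, ha, hb]; abel
      rw [this]
      rfl

theorem BalTensor.tmul_smul (t : Tᵐᵒᵖ) (m : M) (n : N) :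
    t • (BalTensor.tmul S M N m n) = BalTensor.tmul S M N m (t • n) := by
  show QuotientAddGroup.mk (rsmulAux T M N t (m ⊗ₜ[ℤ] n)) = _
  rw [BalTensor.tmul]
  congr 1

end RightAction

section Bimodule

variable (R S T : Type*) [Ring R] [Ring S] [Ring T]
  (M : Type*) [AddCommGroup M] [Module R M] [Module Sᵐᵒᵖ M] [SMulCommClass R Sᵐᵒᵖ M]
  (N : Type*) [AddCommGroup N] [Module S N] [Module Tᵐᵒᵖ N] [SMulCommClass S Tᵐᵒᵖ N]

instance : SMulCommClass R Tᵐᵒᵖ (BalTensor S M N) where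
  smul_comm r t x := by
    induction x using QuotientAddGroup.induction_on with
    | H y =>
      show QuotientAddGroup.mk (lsmulAux R M N r (rsmulAux T M N t y)) =
        QuotientAddGroup.mk (rsmulAux T M N t (lsmulAux R M N r y))
      congr 1
      induction y using TensorProduct.induction_on with
      | zero => simp
      | tmul m n => simp [rsmulAux, lsmulAux]
      | add a b ha hb => simp only [map_add, ha, hb]

end Bimodule

end

end Paper

open Paper MulOpposite CategoryTheory

universe u

namespace Paper

noncomputable section

variable (R S : Type u) [Ring R] [Ring S]
  (M : Type u) [AddCommGroup M] [Module R M] [Module Sᵐᵒᵖ M] [SMulCommClass R Sᵐᵒᵖ M]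

/-- The map `id_M ⊗ f` on `M ⊗[ℤ] L` induced by an `S`-linear map `f`. -/
def mapAux {L L' : Type u} [AddCommGroup L] [AddCommGroup L'] [Module S L] [Module S L']
    (f : L →ₗ[S] L') : M ⊗[ℤ] L →+ M ⊗[ℤ] L' :=
  (LinearMap.lTensor M f.toAddMonoidHom.toIntLinearMap).toAddMonoidHom

theorem mapAux_le {L L' : Type u} [AddCommGroup L] [AddCommGroup L'] [Module S L]
    [Module S L'] (f : L →ₗ[S] L') :
    balRel S M L ≤ (balRel S M L').comap (mapAux S M f) := by
  rw [balRel, AddSubgroup.closure_le]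
  rintro x ⟨m, s, l, rfl⟩
  simp only [SetLike.mem_coe, AddSubgroup.mem_comap, map_sub]
  have h1 : mapAux S M f ((op s • m) ⊗ₜ[ℤ] l) = (op s • m) ⊗ₜ[ℤ] (f l) := by
    simp [mapAux]
  have h2 : mapAux S M f (m ⊗ₜ[ℤ] (s • l)) = m ⊗ₜ[ℤ] (s • f l) := by
    simp [mapAux]
  rw [h1, h2, balRel]
  exact AddSubgroup.subset_closure ⟨m, s, f l, rfl⟩

/-- The `R`-linear map `id_M ⊗ f : M ⊗[S] L → M ⊗[S] L'` induced by an `S`-linear map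
`f : L → L'`. -/
def tensorHom {L L' : Type u} [AddCommGroup L] [AddCommGroup L'] [Module S L] [Module S L']
    (f : L →ₗ[S] L') : BalTensor S M L →ₗ[R] BalTensor S M L' where
  toFun := QuotientAddGroup.map _ _ (mapAux S M f) (mapAux_le S M f)
  map_add' := map_add _
  map_smul' r x := by
    induction x using QuotientAddGroup.induction_on with
    | H y =>
      show QuotientAddGroup.mk (mapAux S M f (lsmulAux R M L r y)) =
        QuotientAddGroup.mk (lsmulAux R M L' r (mapAux S M f y))
      congr 1
      induction y using TensorProduct.induction_on with
      | zero => simp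
      | tmul m l => simp [mapAux, lsmulAux]
      | add a b ha hb => simp only [map_add, ha, hb]

/-- The additive functor `L ↦ M ⊗[S] L` from left `S`-modules to left `R`-modules
given by tensoring with an `(R,S)`-bimodule `M`. -/
def tensorFunctor : ModuleCat.{u} S ⥤ ModuleCat.{u} R where
  obj L := ModuleCat.of R (BalTensor S M L)
  map {L L'} f := ModuleCat.ofHom (tensorHom R S M f.hom)
  map_id L := by
    refine ModuleCat.hom_ext (LinearMap.ext fun x => ?_)
    induction x using QuotientAddGroup.induction_on with
    | H y =>
      show QuotientAddGroup.mk (mapAux S M (𝟙 L : L ⟶ L).hom y) = QuotientAddGroup.mk y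
      congr 1
      induction y using TensorProduct.induction_on with
      | zero => simp
      | tmul m l => simp [mapAux]
      | add a b ha hb => simp only [map_add, ha, hb]
  map_comp {L L' L''} f g := by
    refine ModuleCat.hom_ext (LinearMap.ext fun x => ?_)
    induction x using QuotientAddGroup.induction_on with
    | H y =>
      show QuotientAddGroup.mk (mapAux S M (f ≫ g).hom y) =
        QuotientAddGroup.mk (mapAux S M g.hom (mapAux S M f.hom y))
      congr 1
      induction y using TensorProduct.induction_on with
      | zero => simp
      | tmul m l => simp [mapAux]
      | add a b ha hb => simp only [map_add, ha, hb]

end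

end Paper

namespace Paper

noncomputable section

section Helpers

variable {S : Type*} [Ring S] {M : Type*} [AddCommGroup M] [Module Sᵐᵒᵖ M]
  {N : Type*} [AddCommGroup N] [Module S N]

theorem BalTensor.tmul_add_left (m m' : M) (n : N) :
    BalTensor.tmul S M N (m + m') n = BalTensor.tmul S M N m n + BalTensor.tmul S M N m' n := by
  show QuotientAddGroup.mk _ = _
  rw [TensorProduct.add_tmul]; rfl

theorem BalTensor.tmul_add_right (m : M) (n n' : N) :
    BalTensor.tmul S M N m (n + n') = BalTensor.tmul S M N m n + BalTensor.tmul S M N m n' := by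
  show QuotientAddGroup.mk _ = _
  rw [TensorProduct.tmul_add]; rfl

theorem BalTensor.tmul_zero_right (m : M) :
    BalTensor.tmul S M N m 0 = 0 := by
  show QuotientAddGroup.mk _ = _
  rw [TensorProduct.tmul_zero]; rfl

theorem BalTensor.mk_add' (p q : M ⊗[ℤ] N) :
    (QuotientAddGroup.mk (p + q) : BalTensor S M N)
      = BalTensor.mk S M N p + BalTensor.mk S M N q := rfl

theorem BalTensor.qmk_eq (p : M ⊗[ℤ] N) :
    (QuotientAddGroup.mk p : M ⊗[ℤ] N ⧸ balRel S M N) = BalTensor.mk S M N p := rfl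

theorem BalTensor.tmul_rel (m : M) (s : S) (n : N) :
    BalTensor.tmul S M N (op s • m) n = BalTensor.tmul S M N m (s • n) := by
  rw [BalTensor.tmul, BalTensor.tmul]
  refine (QuotientAddGroup.eq).2 ?_
  have h : ((op s • m) ⊗ₜ[ℤ] n - m ⊗ₜ[ℤ] (s • n)) ∈ balRel S M N :=
    AddSubgroup.subset_closure ⟨m, s, n, rfl⟩
  have h2 : -((op s • m) ⊗ₜ[ℤ] n) + m ⊗ₜ[ℤ] (s • n)
      = -(((op s • m) ⊗ₜ[ℤ] n) - m ⊗ₜ[ℤ] (s • n)) := by abel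
  rw [h2]; exact neg_mem h

end Helpers

section Unit

universe v

variable (A B : Type v) [Ring A] [Ring B]
  (M : Type v) [AddCommGroup M] [Module A M] [Module Bᵐᵒᵖ M] [SMulCommClass A Bᵐᵒᵖ M]
  (N : Type v) [AddCommGroup N] [Module B N] [Module Aᵐᵒᵖ N] [SMulCommClass B Aᵐᵒᵖ N]
  (e : BalTensor A N M ≃+ B)
  (heL : ∀ (b : B) (x : BalTensor A N M), e (b • x) = b * e x)
  (heR : ∀ (b : B) (x : BalTensor A N M), e (op b • x) = e x * b)
  (L : Type v) [AddCommGroup L] [Module B L]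

/-- The bilinear map `(m, l) ↦ e (n ⊗ m) • l`. -/
def epsBil (n : N) : M →+ L →+ L :=
  AddMonoidHom.mk'
    (fun m => AddMonoidHom.mk' (fun l => e (BalTensor.tmul A N M n m) • l)
      (fun l l' => smul_add _ l l'))
    (fun m m' => by
      ext l
      simp only [AddMonoidHom.mk'_apply, AddMonoidHom.add_apply,
        BalTensor.tmul_add_right, map_add, add_smul])

/-- `epsBil` lifted to `M ⊗[ℤ] L`. -/
def epsAux1 (n : N) : M ⊗[ℤ] L →+ L :=
  TensorProduct.liftAddHom (epsBil A B M N e L n) (by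
    intro r m l
    have h1 : BalTensor.tmul A N M n (r • m) = r • BalTensor.tmul A N M n m :=
      map_zsmul (AddMonoidHom.mk' (fun m => BalTensor.tmul A N M n m)
        (fun m m' => BalTensor.tmul_add_right n m m')) r m
    show e (BalTensor.tmul A N M n (r • m)) • l = e (BalTensor.tmul A N M n m) • r • l
    rw [h1, map_zsmul, smul_assoc]
    exact smul_comm r _ l)

theorem epsAux1_tmul (n : N) (m : M) (l : L) :
    epsAux1 A B M N e L n (m ⊗ₜ[ℤ] l) = e (BalTensor.tmul A N M n m) • l :=
  TensorProduct.liftAddHom_tmul _ _ _ _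

/-- `epsAux1` descends to the balanced tensor product `M ⊗[B] L`. -/
def epsAux2 (n : N) : BalTensor B M L →+ L :=
  QuotientAddGroup.lift (balRel B M L) (epsAux1 A B M N e L n) (by
    rw [balRel, AddSubgroup.closure_le]
    rintro x ⟨m, b, l, rfl⟩
    simp only [SetLike.mem_coe, AddMonoidHom.mem_ker, map_sub, epsAux1_tmul]
    rw [← BalTensor.tmul_smul, heR, mul_smul, sub_self])

theorem epsAux2_tmul (n : N) (m : M) (l : L) :
    epsAux2 A B M N e heR L n (BalTensor.tmul B M L m l)
      = e (BalTensor.tmul A N M n m) • l :=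
  epsAux1_tmul A B M N e L n m l

theorem epsAux2_add (n n' : N) (x : BalTensor B M L) :
    epsAux2 A B M N e heR L (n + n') x
      = epsAux2 A B M N e heR L n x + epsAux2 A B M N e heR L n' x := by
  induction x using QuotientAddGroup.induction_on with
  | H y =>
    induction y using TensorProduct.induction_on with
    | zero =>
      show epsAux2 A B M N e heR L (n + n') 0
        = epsAux2 A B M N e heR L n 0 + epsAux2 A B M N e heR L n' 0
      simp
    | tmul m l =>
      show epsAux2 A B M N e heR L (n + n') (BalTensor.tmul B M L m l)
        = epsAux2 A B M N e heR L n (BalTensor.tmul B M L m l)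
          + epsAux2 A B M N e heR L n' (BalTensor.tmul B M L m l)
      simp only [epsAux2_tmul, BalTensor.tmul_add_left, map_add, add_smul]
    | add p q hp hq =>
      rw [BalTensor.mk_add']; rw [BalTensor.qmk_eq] at hp hq
      simp only [map_add, hp, hq]
      abel

theorem epsAux2_rel (a : A) (n : N) (x : BalTensor B M L) :
    epsAux2 A B M N e heR L (op a • n) x = epsAux2 A B M N e heR L n (a • x) := by
  induction x using QuotientAddGroup.induction_on with
  | H y =>
    induction y using TensorProduct.induction_on with
    | zero =>
      show epsAux2 A B M N e heR L (op a • n) 0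
        = epsAux2 A B M N e heR L n (a • (0 : BalTensor B M L))
      rw [map_zero]; erw [smul_zero, map_zero]
    | tmul m l =>
      have hx : a • (BalTensor.tmul B M L m l) = BalTensor.tmul B M L (a • m) l :=
        BalTensor.smul_tmul A B M L a m l
      show epsAux2 A B M N e heR L (op a • n) (BalTensor.tmul B M L m l)
        = epsAux2 A B M N e heR L n (a • (BalTensor.tmul B M L m l))
      rw [hx, epsAux2_tmul, epsAux2_tmul, BalTensor.tmul_rel]
    | add p q hp hq =>
      rw [BalTensor.mk_add']; rw [BalTensor.qmk_eq] at hp hq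
      simp only [map_add, smul_add, hp, hq]
      rw [show a • (BalTensor.mk B M L p + BalTensor.mk B M L q)
        = a • BalTensor.mk B M L p + a • BalTensor.mk B M L q from smul_add _ _ _, map_add]

include heL in
theorem epsAux2_smul (b : B) (n : N) (x : BalTensor B M L) :
    epsAux2 A B M N e heR L (b • n) x = b • epsAux2 A B M N e heR L n x := by
  induction x using QuotientAddGroup.induction_on with
  | H y =>
    induction y using TensorProduct.induction_on with
    | zero =>
      show epsAux2 A B M N e heR L (b • n) 0 = b • epsAux2 A B M N e heR L n 0
      simp
    | tmul m l =>
      show epsAux2 A B M N e heR L (b • n) (BalTensor.tmul B M L m l)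
        = b • epsAux2 A B M N e heR L n (BalTensor.tmul B M L m l)
      rw [epsAux2_tmul, epsAux2_tmul, ← BalTensor.smul_tmul B A N M b n m, heL, mul_smul]
    | add p q hp hq =>
      rw [BalTensor.mk_add']; rw [BalTensor.qmk_eq] at hp hq
      simp only [map_add, smul_add, hp, hq]

/-- The map `N ⊗[ℤ] (M ⊗[B] L) →+ L`, `n ⊗ x ↦ εₙ x`. -/
def epsAux3 : N ⊗[ℤ] BalTensor B M L →+ L :=
  TensorProduct.liftAddHom
    (AddMonoidHom.mk' (fun n => epsAux2 A B M N e heR L n)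
      (fun n n' => by ext x; exact epsAux2_add A B M N e heR L n n' x))
    (by
      intro r n x
      show epsAux2 A B M N e heR L (r • n) x = epsAux2 A B M N e heR L n (r • x)
      have h1 : epsAux2 A B M N e heR L (r • n) x
          = r • epsAux2 A B M N e heR L n x :=
        map_zsmul (AddMonoidHom.mk' (fun n => epsAux2 A B M N e heR L n x)
          (fun a b => epsAux2_add A B M N e heR L a b x)) r n
      rw [h1, map_zsmul])

theorem epsAux3_tmul (n : N) (x : BalTensor B M L) :
    epsAux3 A B M N e heR L (n ⊗ₜ[ℤ] x) = epsAux2 A B M N e heR L n x :=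
  TensorProduct.liftAddHom_tmul _ _ _ _

/-- The counit/unit map `ε : N ⊗[A] (M ⊗[B] L) →+ L`. -/
def epsHom : BalTensor A N (BalTensor B M L) →+ L :=
  QuotientAddGroup.lift (balRel A N (BalTensor B M L)) (epsAux3 A B M N e heR L) (by
    rw [balRel, AddSubgroup.closure_le]
    rintro z ⟨n, a, x, rfl⟩
    simp only [SetLike.mem_coe, AddMonoidHom.mem_ker, map_sub, epsAux3_tmul]
    rw [epsAux2_rel]; exact sub_self _)

theorem epsHom_tmul (n : N) (m : M) (l : L) :
    epsHom A B M N e heR L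
        (BalTensor.tmul A N (BalTensor B M L) n (BalTensor.tmul B M L m l))
      = e (BalTensor.tmul A N M n m) • l := by
  show epsAux3 A B M N e heR L (n ⊗ₜ[ℤ] BalTensor.tmul B M L m l) = _
  rw [epsAux3_tmul, epsAux2_tmul]

include heL in
theorem epsHom_smul (b : B) (z : BalTensor A N (BalTensor B M L)) :
    epsHom A B M N e heR L (b • z) = b • epsHom A B M N e heR L z := by
  induction z using QuotientAddGroup.induction_on with
  | H y =>
    show epsAux3 A B M N e heR L (lsmulAux B N (BalTensor B M L) b y)
      = b • epsAux3 A B M N e heR L y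
    induction y using TensorProduct.induction_on with
    | zero => simp
    | tmul n x =>
      have h : lsmulAux B N (BalTensor B M L) b (n ⊗ₜ[ℤ] x) = (b • n) ⊗ₜ[ℤ] x := by
        simp [lsmulAux]
      rw [h, epsAux3_tmul, epsAux3_tmul, epsAux2_smul A B M N e heL heR L]
    | add p q hp hq => simp only [map_add, smul_add, hp, hq]

/-- The additive map `θₗ : N ⊗[ℤ] M →+ N ⊗[ℤ] (M ⊗[B] L)`, `n ⊗ m ↦ n ⊗ (m ⊗ l)`. -/
def thetaAux (l : L) : N ⊗[ℤ] M →+ N ⊗[ℤ] BalTensor B M L :=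
  (LinearMap.lTensor N
    ((AddMonoidHom.mk' (fun m => BalTensor.tmul B M L m l)
      (fun m m' => BalTensor.tmul_add_left m m' l)).toIntLinearMap)).toAddMonoidHom

theorem thetaAux_le (l : L) :
    balRel A N M ≤ (balRel A N (BalTensor B M L)).comap (thetaAux B M N L l) := by
  rw [balRel, AddSubgroup.closure_le]
  rintro z ⟨n, a, m, rfl⟩
  simp only [SetLike.mem_coe, AddSubgroup.mem_comap, map_sub]
  have h1 : thetaAux B M N L l ((op a • n) ⊗ₜ[ℤ] m)
      = (op a • n) ⊗ₜ[ℤ] BalTensor.tmul B M L m l := by simp [thetaAux]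
  have h2 : thetaAux B M N L l (n ⊗ₜ[ℤ] (a • m))
      = n ⊗ₜ[ℤ] (a • BalTensor.tmul B M L m l) := by
    simp only [thetaAux, LinearMap.toAddMonoidHom_coe, LinearMap.lTensor_tmul,
      AddMonoidHom.coe_toIntLinearMap, AddMonoidHom.mk'_apply]
    rw [BalTensor.smul_tmul A B M L]
  rw [h1, h2]
  exact AddSubgroup.subset_closure ⟨n, a, BalTensor.tmul B M L m l, rfl⟩

/-- The map `θₗ : N ⊗[A] M →+ N ⊗[A] (M ⊗[B] L)`, `n ⊗ m ↦ n ⊗ (m ⊗ l)`. -/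
def theta (l : L) : BalTensor A N M →+ BalTensor A N (BalTensor B M L) :=
  QuotientAddGroup.map _ _ (thetaAux B M N L l) (thetaAux_le A B M N L l)

theorem theta_tmul (l : L) (n : N) (m : M) :
    theta A B M N L l (BalTensor.tmul A N M n m)
      = BalTensor.tmul A N (BalTensor B M L) n (BalTensor.tmul B M L m l) := by
  have h : thetaAux B M N L l (n ⊗ₜ[ℤ] m) = n ⊗ₜ[ℤ] BalTensor.tmul B M L m l := by
    simp [thetaAux]
  show QuotientAddGroup.mk (thetaAux B M N L l (n ⊗ₜ[ℤ] m)) = _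
  rw [h]
  rfl

theorem theta_add_left (l l' : L) (x : BalTensor A N M) :
    theta A B M N L (l + l') x = theta A B M N L l x + theta A B M N L l' x := by
  induction x using QuotientAddGroup.induction_on with
  | H y =>
    induction y using TensorProduct.induction_on with
    | zero =>
      show theta A B M N L (l + l') 0 = theta A B M N L l 0 + theta A B M N L l' 0
      simp
    | tmul n m =>
      show theta A B M N L (l + l') (BalTensor.tmul A N M n m)
        = theta A B M N L l (BalTensor.tmul A N M n m)
          + theta A B M N L l' (BalTensor.tmul A N M n m)
      simp only [theta_tmul, BalTensor.tmul_add_left, BalTensor.tmul_add_right]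
    | add p q hp hq =>
      rw [BalTensor.mk_add']; rw [BalTensor.qmk_eq] at hp hq
      simp only [map_add, hp, hq]
      abel

theorem theta_smul (l : L) (b : B) (x : BalTensor A N M) :
    theta A B M N L l (b • x) = b • theta A B M N L l x := by
  induction x using QuotientAddGroup.induction_on with
  | H y =>
    induction y using TensorProduct.induction_on with
    | zero =>
      show theta A B M N L l (b • (0 : BalTensor A N M)) = b • theta A B M N L l 0
      rw [map_zero]; erw [smul_zero, smul_zero, map_zero]
    | tmul n m =>
      show theta A B M N L l (b • BalTensor.tmul A N M n m)
        = b • theta A B M N L l (BalTensor.tmul A N M n m)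
      rw [BalTensor.smul_tmul B A N M, theta_tmul, theta_tmul,
        ← BalTensor.smul_tmul B A N (BalTensor B M L)]
    | add p q hp hq =>
      rw [BalTensor.mk_add']; rw [BalTensor.qmk_eq] at hp hq
      simp only [map_add, smul_add, hp, hq]
      rw [show b • (BalTensor.mk A N M p + BalTensor.mk A N M q)
        = b • BalTensor.mk A N M p + b • BalTensor.mk A N M q from smul_add _ _ _, map_add, hp, hq]
      exact (smul_add _ _ _).symm

theorem theta_op_smul (l : L) (b : B) (x : BalTensor A N M) :
    theta A B M N L (b • l) x = theta A B M N L l (op b • x) := by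
  induction x using QuotientAddGroup.induction_on with
  | H y =>
    induction y using TensorProduct.induction_on with
    | zero =>
      show theta A B M N L (b • l) 0 = theta A B M N L l (op b • (0 : BalTensor A N M))
      rw [map_zero]; erw [smul_zero, map_zero]
    | tmul n m =>
      show theta A B M N L (b • l) (BalTensor.tmul A N M n m)
        = theta A B M N L l (op b • BalTensor.tmul A N M n m)
      rw [BalTensor.tmul_smul A B N M, theta_tmul, theta_tmul, ← BalTensor.tmul_rel]
    | add p q hp hq =>
      rw [BalTensor.mk_add']; rw [BalTensor.qmk_eq] at hp hq
      simp only [map_add, smul_add, hp, hq]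
      rw [show op b • (BalTensor.mk A N M p + BalTensor.mk A N M q)
        = op b • BalTensor.mk A N M p + op b • BalTensor.mk A N M q from smul_add _ _ _, map_add]

theorem eps_theta (l : L) (x : BalTensor A N M) :
    epsHom A B M N e heR L (theta A B M N L l x) = e x • l := by
  induction x using QuotientAddGroup.induction_on with
  | H y =>
    induction y using TensorProduct.induction_on with
    | zero =>
      show epsHom A B M N e heR L (theta A B M N L l 0) = e 0 • l
      simp
    | tmul n m =>
      show epsHom A B M N e heR L (theta A B M N L l (BalTensor.tmul A N M n m))
        = e (BalTensor.tmul A N M n m) • l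
      rw [theta_tmul, epsHom_tmul]
    | add p q hp hq =>
      rw [BalTensor.mk_add']; rw [BalTensor.qmk_eq] at hp hq
      simp only [map_add, add_smul, hp, hq]

include heL heR in
theorem symm_one_smul (b : B) : b • e.symm 1 = op b • e.symm 1 := by
  apply e.injective
  rw [heL, heR, e.apply_symm_apply, mul_one, one_mul]

/-- The inverse map `η : L →+ N ⊗[A] (M ⊗[B] L)`. -/
def etaHom : L →+ BalTensor A N (BalTensor B M L) :=
  AddMonoidHom.mk' (fun l => theta A B M N L l (e.symm 1))
    (fun l l' => theta_add_left A B M N L l l' (e.symm 1))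

include heL in
theorem eta_eps (z : BalTensor A N (BalTensor B M L)) :
    etaHom A B M N e L (epsHom A B M N e heR L z) = z := by
  induction z using QuotientAddGroup.induction_on with
  | H y =>
    induction y using TensorProduct.induction_on with
    | zero =>
      show etaHom A B M N e L (epsHom A B M N e heR L 0) = 0
      simp only [map_zero]
    | tmul n x =>
      induction x using QuotientAddGroup.induction_on with
      | H w =>
        induction w using TensorProduct.induction_on with
        | zero =>
          show etaHom A B M N e L (epsHom A B M N e heR L
            (BalTensor.tmul A N (BalTensor B M L) n 0))
            = BalTensor.tmul A N (BalTensor B M L) n 0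
          rw [BalTensor.tmul_zero_right]
          simp only [map_zero]
        | tmul m l =>
          show etaHom A B M N e L (epsHom A B M N e heR L
            (BalTensor.tmul A N (BalTensor B M L) n (BalTensor.tmul B M L m l)))
            = BalTensor.tmul A N (BalTensor B M L) n (BalTensor.tmul B M L m l)
          rw [epsHom_tmul]
          show theta A B M N L (e (BalTensor.tmul A N M n m) • l) (e.symm 1) = _
          rw [theta_op_smul, ← symm_one_smul A B M N e heL heR]
          have h3 : e (BalTensor.tmul A N M n m) • e.symm 1 = BalTensor.tmul A N M n m := by
            apply e.injective
            rw [heL, e.apply_symm_apply, mul_one]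
          rw [h3, theta_tmul]
        | add p q hp hq =>
          have h1 : BalTensor.tmul A N (BalTensor B M L) n
                (QuotientAddGroup.mk (p + q) : BalTensor B M L)
              = BalTensor.tmul A N (BalTensor B M L) n (QuotientAddGroup.mk p)
                + BalTensor.tmul A N (BalTensor B M L) n (QuotientAddGroup.mk q) := by
            rw [show (QuotientAddGroup.mk (p + q) : BalTensor B M L)
              = QuotientAddGroup.mk p + QuotientAddGroup.mk q from rfl]
            exact BalTensor.tmul_add_right n _ _
          show etaHom A B M N e L (epsHom A B M N e heR L
            (BalTensor.tmul A N (BalTensor B M L) n (QuotientAddGroup.mk (p + q))))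
            = BalTensor.tmul A N (BalTensor B M L) n (QuotientAddGroup.mk (p + q))
          have hp' : etaHom A B M N e L (epsHom A B M N e heR L
              (BalTensor.tmul A N (BalTensor B M L) n (QuotientAddGroup.mk p)))
              = BalTensor.tmul A N (BalTensor B M L) n (QuotientAddGroup.mk p) := hp
          have hq' : etaHom A B M N e L (epsHom A B M N e heR L
              (BalTensor.tmul A N (BalTensor B M L) n (QuotientAddGroup.mk q)))
              = BalTensor.tmul A N (BalTensor B M L) n (QuotientAddGroup.mk q) := hq
          rw [h1, map_add, map_add, hp', hq']
    | add p q hp hq =>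
      rw [BalTensor.mk_add']; rw [BalTensor.qmk_eq] at hp hq
      simp only [map_add, hp, hq]

theorem eps_eta (l : L) :
    epsHom A B M N e heR L (etaHom A B M N e L l) = l := by
  show epsHom A B M N e heR L (theta A B M N L l (e.symm 1)) = l
  rw [eps_theta, e.apply_symm_apply, one_smul]

/-- The `B`-linear unit equivalence `N ⊗[A] (M ⊗[B] L) ≃ₗ[B] L`. -/
def unitEquiv : BalTensor A N (BalTensor B M L) ≃ₗ[B] L where
  toFun := epsHom A B M N e heR L
  map_add' := map_add _
  map_smul' := epsHom_smul A B M N e heL heR L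
  invFun := etaHom A B M N e L
  left_inv := eta_eps A B M N e heL heR L
  right_inv := eps_eta A B M N e heR L

/-- The natural isomorphism `(M ⊗[B] -) ⋙ (N ⊗[A] -) ≅ 𝟭`. -/
def unitIso : tensorFunctor A B M ⋙ tensorFunctor B A N ≅ 𝟭 (ModuleCat.{v} B) :=
  NatIso.ofComponents
    (fun L => (unitEquiv A B M N e heL heR L).toModuleIso)
    (by
      intro L L' f
      refine ModuleCat.hom_ext (LinearMap.ext fun z => ?_)
      show epsHom A B M N e heR L' (tensorHom B A N (tensorHom A B M f.hom) z)
        = f.hom (epsHom A B M N e heR L z)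
      induction z using QuotientAddGroup.induction_on with
      | H y =>
        induction y using TensorProduct.induction_on with
        | zero =>
          show epsHom A B M N e heR L' (tensorHom B A N (tensorHom A B M f.hom) 0)
            = f.hom (epsHom A B M N e heR L 0)
          simp
        | tmul n x =>
          induction x using QuotientAddGroup.induction_on with
          | H w =>
            induction w using TensorProduct.induction_on with
            | zero =>
              show epsHom A B M N e heR L' (tensorHom B A N (tensorHom A B M f.hom)
                (BalTensor.tmul A N (BalTensor B M L) n 0))
                = f.hom (epsHom A B M N e heR L (BalTensor.tmul A N (BalTensor B M L) n 0))
              rw [BalTensor.tmul_zero_right]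
              simp
            | tmul m l =>
              have h1 : tensorHom A B M f.hom (BalTensor.tmul B M L m l)
                  = BalTensor.tmul B M L' m (f.hom l) := by
                have hm : mapAux B M f.hom (m ⊗ₜ[ℤ] l) = m ⊗ₜ[ℤ] (f.hom l) := by simp [mapAux]
                show QuotientAddGroup.mk (mapAux B M f.hom (m ⊗ₜ[ℤ] l)) = _
                rw [hm]
                rfl
              have h2 : tensorHom B A N (tensorHom A B M f.hom)
                  (BalTensor.tmul A N (BalTensor B M L) n (BalTensor.tmul B M L m l))
                  = BalTensor.tmul A N (BalTensor B M L') n (BalTensor.tmul B M L' m (f.hom l)) := by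
                have hm : mapAux A N (tensorHom A B M f.hom) (n ⊗ₜ[ℤ] BalTensor.tmul B M L m l)
                    = n ⊗ₜ[ℤ] (tensorHom A B M f.hom (BalTensor.tmul B M L m l)) := by
                  simp [mapAux]
                show QuotientAddGroup.mk
                  (mapAux A N (tensorHom A B M f.hom) (n ⊗ₜ[ℤ] BalTensor.tmul B M L m l)) = _
                rw [hm, h1]
                rfl
              show epsHom A B M N e heR L' (tensorHom B A N (tensorHom A B M f.hom)
                (BalTensor.tmul A N (BalTensor B M L) n (BalTensor.tmul B M L m l)))
                = f.hom (epsHom A B M N e heR L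
                  (BalTensor.tmul A N (BalTensor B M L) n (BalTensor.tmul B M L m l)))
              rw [h2, epsHom_tmul, epsHom_tmul, map_smul]
            | add p q hp hq =>
              have h1 : (BalTensor.tmul A N (BalTensor B M L) n
                    (QuotientAddGroup.mk (p + q)))
                  = BalTensor.tmul A N (BalTensor B M L) n (QuotientAddGroup.mk p)
                    + BalTensor.tmul A N (BalTensor B M L) n (QuotientAddGroup.mk q) := by
                rw [show (QuotientAddGroup.mk (p + q) : BalTensor B M L)
                  = QuotientAddGroup.mk p + QuotientAddGroup.mk q from rfl]
                exact BalTensor.tmul_add_right n _ _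
              show epsHom A B M N e heR L' (tensorHom B A N (tensorHom A B M f.hom)
                (BalTensor.tmul A N (BalTensor B M L) n (QuotientAddGroup.mk (p + q))))
                = f.hom (epsHom A B M N e heR L
                  (BalTensor.tmul A N (BalTensor B M L) n (QuotientAddGroup.mk (p + q))))
              have hp' : epsHom A B M N e heR L' (tensorHom B A N (tensorHom A B M f.hom)
                  (BalTensor.tmul A N (BalTensor B M L) n (QuotientAddGroup.mk p)))
                  = f.hom (epsHom A B M N e heR L
                    (BalTensor.tmul A N (BalTensor B M L) n (QuotientAddGroup.mk p))) := hp
              have hq' : epsHom A B M N e heR L' (tensorHom B A N (tensorHom A B M f.hom)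
                  (BalTensor.tmul A N (BalTensor B M L) n (QuotientAddGroup.mk q)))
                  = f.hom (epsHom A B M N e heR L
                    (BalTensor.tmul A N (BalTensor B M L) n (QuotientAddGroup.mk q))) := hq
              rw [h1, map_add, map_add, map_add, hp', hq']
              exact (map_add f.hom _ _).symm
        | add p q hp hq =>
          erw [BalTensor.mk_add' (S := A) (M := N) (N := BalTensor B M L) p q]
          erw [BalTensor.qmk_eq (S := A) (M := N) (N := BalTensor B M L) p] at hp
          erw [BalTensor.qmk_eq (S := A) (M := N) (N := BalTensor B M L) q] at hq
          simp only [map_add, hp, hq])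

end Unit

section Additive

universe v

variable (R S : Type v) [Ring R] [Ring S]
  (M : Type v) [AddCommGroup M] [Module R M] [Module Sᵐᵒᵖ M] [SMulCommClass R Sᵐᵒᵖ M]

theorem tensorFunctor_additive : (tensorFunctor R S M).Additive := by
  constructor
  intro X Y f g
  refine ModuleCat.hom_ext (LinearMap.ext fun x => ?_)
  rw [ModuleCat.hom_add, LinearMap.add_apply]
  induction x using QuotientAddGroup.induction_on with
  | H y =>
    show QuotientAddGroup.mk (mapAux S M (f + g).hom y)
      = QuotientAddGroup.mk (mapAux S M f.hom y) + QuotientAddGroup.mk (mapAux S M g.hom y)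
    refine Eq.trans ?_ (QuotientAddGroup.mk_add _ _ _)
    congr 1
    induction y using TensorProduct.induction_on with
    | zero => simp
    | tmul m l =>
      have hfg : (f + g).hom l = f.hom l + g.hom l := rfl
      simp [mapAux, hfg, TensorProduct.tmul_add]
    | add a b ha hb =>
      simp only [map_add, ha, hb]
      abel

end Additive

end

end Paper

/-- Let `R, S` be rings, `M` an `(R,S)`-bimodule and `N` an
`(S,R)`-bimodule with an `(R,R)`-bimodule isomorphism `M ⊗[S] N ≅ R` and an
`(S,S)`-bimodule isomorphism `N ⊗[R] M ≅ S`. Then the additive functors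
`G : L ↦ M ⊗[S] L` (from left `S`-modules to left `R`-modules) and
`F : K ↦ N ⊗[R] K` (from left `R`-modules to left `S`-modules) satisfy
`F ∘ G ≅ id` and `G ∘ F ≅ id` naturally; in particular `G` and `F` are mutually
quasi-inverse equivalences of categories. -/
theorem tensor_functors_equivalence
    (R S : Type u) [Ring R] [Ring S]
    (M : Type u) [AddCommGroup M] [Module R M] [Module Sᵐᵒᵖ M] [SMulCommClass R Sᵐᵒᵖ M]
    (N : Type u) [AddCommGroup N] [Module S N] [Module Rᵐᵒᵖ N] [SMulCommClass S Rᵐᵒᵖ N]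
    (eR : BalTensor S M N ≃+ R)
    (eR_left : ∀ (r : R) (x : BalTensor S M N), eR (r • x) = r * eR x)
    (eR_right : ∀ (r : R) (x : BalTensor S M N), eR (op r • x) = eR x * r)
    (eS : BalTensor R N M ≃+ S)
    (eS_left : ∀ (s : S) (x : BalTensor R N M), eS (s • x) = s * eS x)
    (eS_right : ∀ (s : S) (x : BalTensor R N M), eS (op s • x) = eS x * s) :
    (tensorFunctor R S M).Additive ∧ (tensorFunctor S R N).Additive ∧
    Nonempty (tensorFunctor R S M ⋙ tensorFunctor S R N ≅ 𝟭 (ModuleCat.{u} S)) ∧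
    Nonempty (tensorFunctor S R N ⋙ tensorFunctor R S M ≅ 𝟭 (ModuleCat.{u} R)) ∧
    (tensorFunctor R S M).IsEquivalence ∧ (tensorFunctor S R N).IsEquivalence := by
  have hG : (tensorFunctor R S M).Additive := tensorFunctor_additive R S M
  have hF : (tensorFunctor S R N).Additive := tensorFunctor_additive S R N
  have i1 : tensorFunctor R S M ⋙ tensorFunctor S R N ≅ 𝟭 (ModuleCat.{u} S) :=
    unitIso R S M N eS eS_left eS_right
  have i2 : tensorFunctor S R N ⋙ tensorFunctor R S M ≅ 𝟭 (ModuleCat.{u} R) :=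
    unitIso S R N M eR eR_left eR_right
  refine ⟨hG, hF, ⟨i1⟩, ⟨i2⟩, ?_, ?_⟩
  · exact (CategoryTheory.Equivalence.mk (tensorFunctor R S M) (tensorFunctor S R N)
      i1.symm i2).isEquivalence_functor
  · exact (CategoryTheory.Equivalence.mk (tensorFunctor S R N) (tensorFunctor R S M)
      i2.symm i1).isEquivalence_functor
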